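/- Let B be a p×p Hermitian matrix, z = u + iv with v > 0, r ∈ C^p, and M any p×p matrix. Then |tr((B − zI)^{-1} M) − tr((B + rr' − zI)^{-1} M)| ≤ ||M||/v. -/

import Mathlib

open Matrix

variable {p : ℕ}

private lemma aux_vecMulVec_mul (a b : Fin p → ℂ) (N : Matrix (Fin p) (Fin p) ℂ) :
    vecMulVec a b * N = vecMulVec a (b ᵥ* N) := by
  ext i j
  simp [Matrix.mul_apply, vecMulVec_apply, Matrix.vecMul, dotProduct,
    Finset.mul_sum, mul_assoc]

private lemma aux_mul_vecMulVec (N : Matrix (Fin p) (Fin p) ℂ) (a b : Fin p → ℂ) :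
    N * vecMulVec a b = vecMulVec (N *ᵥ a) b := by
  ext i j
  simp [Matrix.mul_apply, vecMulVec_apply, Matrix.mulVec, dotProduct,
    Finset.sum_mul, mul_assoc]

private lemma aux_vecMul_vecMulVec (u a b : Fin p → ℂ) :
    u ᵥ* vecMulVec a b = (u ⬝ᵥ a) • b := by
  ext j
  simp [Matrix.vecMul, vecMulVec_apply, dotProduct, Finset.sum_mul, mul_assoc]

private lemma aux_vecMulVec_smul (a : Fin p → ℂ) (c : ℂ) (b : Fin p → ℂ) :
    vecMulVec a (c • b) = c • vecMulVec a b := by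
  ext i j
  simp [vecMulVec_apply]
  ring

private lemma aux_trace_vecMulVec (a b : Fin p → ℂ) :
    Matrix.trace (vecMulVec a b) = a ⬝ᵥ b := by
  simp [Matrix.trace, Matrix.diag, vecMulVec_apply, dotProduct]

private lemma aux_herm_quad_real {C : Matrix (Fin p) (Fin p) ℂ} (hC : C.IsHermitian)
    (x : Fin p → ℂ) : (star x ⬝ᵥ C *ᵥ x).im = 0 := by
  have h : star (star x ⬝ᵥ C *ᵥ x) = star x ⬝ᵥ C *ᵥ x := by
    rw [← star_dotProduct, star_mulVec, ← dotProduct_mulVec, hC.eq]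
  exact Complex.conj_eq_iff_im.mp h

private lemma aux_isUnit_det {C : Matrix (Fin p) (Fin p) ℂ} (hC : C.IsHermitian) {z : ℂ}
    (hz : z.im ≠ 0) : IsUnit (C - z • (1 : Matrix (Fin p) (Fin p) ℂ)).det := by
  rw [isUnit_iff_ne_zero]
  intro hdet
  obtain ⟨x, hx0, hx⟩ := (Matrix.exists_mulVec_eq_zero_iff).mpr hdet
  have h1 : star x ⬝ᵥ ((C - z • (1 : Matrix (Fin p) (Fin p) ℂ)) *ᵥ x) = 0 := by
    rw [hx, dotProduct_zero]
  have h2 : star x ⬝ᵥ (C *ᵥ x) - z * (star x ⬝ᵥ x) = 0 := by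
    rw [Matrix.sub_mulVec] at h1
    simpa [Matrix.smul_mulVec, smul_eq_mul, dotProduct_smul] using h1
  have him := congrArg Complex.im h2
  have hq := aux_herm_quad_real hC x
  have hxx : star x ⬝ᵥ x = ((∑ i, Complex.normSq (x i) : ℝ) : ℂ) := by
    simp only [dotProduct, Pi.star_apply, Complex.star_def,
      ← Complex.normSq_eq_conj_mul_self]
    norm_cast
  have hpos : (0:ℝ) < ∑ i, Complex.normSq (x i) := by
    apply Finset.sum_pos'
    · intro i _; exact Complex.normSq_nonneg _
    · obtain ⟨i, hi⟩ := Function.ne_iff.mp hx0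
      exact ⟨i, Finset.mem_univ i, by simpa [Complex.normSq_pos] using hi⟩
  rw [hxx] at him
  simp [hq, Complex.mul_im] at him
  rcases him with h | h
  · exact hz h
  · exact hpos.ne' h

/-- Rank-one perturbation bound for resolvent traces
(Lemma 2.6 of Silverstein–Bai): for Hermitian `B`, `z` with `Im z = v > 0`,
`|tr((B−zI)⁻¹M) − tr((B+rr*−zI)⁻¹M)| ≤ ‖M‖/v`. -/
theorem stmt6 (p : ℕ) (B : Matrix (Fin p) (Fin p) ℂ) (hB : B.IsHermitian)
    (z : ℂ) (hz : 0 < z.im) (r : Fin p → ℂ) (M : Matrix (Fin p) (Fin p) ℂ) :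
    ‖Matrix.trace ((B - z • (1 : Matrix (Fin p) (Fin p) ℂ))⁻¹ * M)
        - Matrix.trace ((B + vecMulVec r (star r) - z • (1 : Matrix (Fin p) (Fin p) ℂ))⁻¹ * M)‖
      ≤ ‖Matrix.toEuclideanCLM (𝕜 := ℂ) M‖ / z.im := by
  set K := ‖Matrix.toEuclideanCLM (𝕜 := ℂ) M‖ with hK
  set A := B - z • (1 : Matrix (Fin p) (Fin p) ℂ) with hA
  set R := vecMulVec r (star r) with hRdef
  have hRherm : R.IsHermitian := by
    ext i j
    simp [hRdef, Matrix.conjTranspose_apply, vecMulVec_apply, mul_comm]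
  have hAdet : IsUnit A.det := aux_isUnit_det hB hz.ne'
  have hA1eq : B + R - z • (1 : Matrix (Fin p) (Fin p) ℂ) = A + R := add_sub_right_comm B R _
  have hA1det : IsUnit (A + R).det := by
    have := aux_isUnit_det (hB.add hRherm) hz.ne'
    rwa [hA1eq] at this
  set q := A⁻¹ *ᵥ r with hqdef
  have hrq : A *ᵥ q = r := by
    rw [hqdef, Matrix.mulVec_mulVec, Matrix.mul_nonsing_inv _ hAdet, Matrix.one_mulVec]
  by_cases hq0 : q = 0
  · have hr0 : r = 0 := by rw [← hrq, hq0, Matrix.mulVec_zero]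
    have hR0 : R = 0 := by
      ext i j; simp [hRdef, vecMulVec_apply, hr0]
    rw [hA1eq, hR0, add_zero, sub_self, norm_zero]
    exact div_nonneg (norm_nonneg _) hz.le
  -- main case
  have hAH : Aᴴ = B - (starRingEnd ℂ z) • (1 : Matrix (Fin p) (Fin p) ℂ) := by
    rw [hA, Matrix.conjTranspose_sub, Matrix.conjTranspose_smul, Matrix.conjTranspose_one, hB.eq]
    rfl
  set x := (Aᴴ)⁻¹ *ᵥ r with hxdef
  have hstarx : star x = star r ᵥ* A⁻¹ := by
    rw [hxdef, star_mulVec, Matrix.conjTranspose_nonsing_inv, conjTranspose_conjTranspose]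
  -- Euclidean embedding
  set Ee : (Fin p → ℂ) → EuclideanSpace ℂ (Fin p) := ⇑(WithLp.equiv 2 (Fin p → ℂ)).symm with hEe
  have hinner : ∀ a b : Fin p → ℂ, (inner ℂ (Ee a) (Ee b) : ℂ) = star a ⬝ᵥ b := by
    intro a b
    rw [EuclideanSpace.inner_eq_star_dotProduct, dotProduct_comm]
    rfl
  have hnormsq : ∀ a : Fin p → ℂ, star a ⬝ᵥ a = ((‖Ee a‖ : ℝ) : ℂ) ^ 2 := by
    intro a
    rw [← hinner a a, inner_self_eq_norm_sq_to_K]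
    norm_cast
  set nq := ‖Ee q‖ with hnq
  have hnqpos : 0 < nq := by
    rw [hnq, norm_pos_iff]
    intro h
    exact hq0 ((WithLp.equiv 2 (Fin p → ℂ)).symm.injective (by simpa [hEe] using h))
  set t := star r ⬝ᵥ q with htdef
  have ht : t = star q ⬝ᵥ (B *ᵥ q) - (starRingEnd ℂ z) * ((nq : ℝ) : ℂ) ^ 2 := by
    rw [htdef]
    conv_lhs => rw [← hrq]
    rw [star_mulVec, ← dotProduct_mulVec, hAH, Matrix.sub_mulVec,
      Matrix.smul_mulVec, Matrix.one_mulVec, dotProduct_sub, dotProduct_smul,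
      smul_eq_mul, hnormsq q]
  have htim : t.im = z.im * nq ^ 2 := by
    have h := congrArg Complex.im ht
    rw [Complex.sub_im, aux_herm_quad_real hB q] at h
    rw [h]
    have : (((nq:ℝ):ℂ)^2) = ((nq^2 : ℝ) : ℂ) := by push_cast; ring
    rw [this, Complex.mul_im]
    simp [Complex.conj_im, Complex.conj_re]
    simp [← Complex.ofReal_pow]
  set d := 1 + t with hddef
  have hdim : d.im = z.im * nq ^ 2 := by
    rw [hddef, Complex.add_im, Complex.one_im, zero_add, htim]
  have hdimpos : 0 < d.im := by
    rw [hdim]; positivity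
  have hd0 : d ≠ 0 := by
    intro h
    rw [h] at hdimpos
    simp at hdimpos
  -- Sherman–Morrison
  have hRAR : R * A⁻¹ * R = t • R := by
    rw [hRdef, aux_vecMulVec_mul, aux_vecMulVec_mul, aux_vecMul_vecMulVec,
      ← dotProduct_mulVec, ← hqdef, ← htdef, aux_vecMulVec_smul]
  have hSM : (A + R) * (A⁻¹ - d⁻¹ • (A⁻¹ * R * A⁻¹)) = 1 := by
    have hA' : A * (A⁻¹ * R * A⁻¹) = R * A⁻¹ := by
      rw [← mul_assoc, ← mul_assoc, Matrix.mul_nonsing_inv _ hAdet, one_mul]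
    have hR' : R * (A⁻¹ * R * A⁻¹) = t • (R * A⁻¹) := by
      calc R * (A⁻¹ * R * A⁻¹) = R * A⁻¹ * R * A⁻¹ := by rw [← mul_assoc, ← mul_assoc]
        _ = (t • R) * A⁻¹ := by rw [hRAR]
        _ = t • (R * A⁻¹) := by rw [smul_mul_assoc]
    have h2 : (A + R) * (A⁻¹ * R * A⁻¹) = d • (R * A⁻¹) := by
      rw [add_mul, hA', hR', hddef, add_smul, one_smul]
    rw [mul_sub, Matrix.mul_smul, add_mul, Matrix.mul_nonsing_inv _ hAdet, h2,
      smul_smul, inv_mul_cancel₀ hd0, one_smul, add_sub_cancel_right]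
  have hinv : (A + R)⁻¹ = A⁻¹ - d⁻¹ • (A⁻¹ * R * A⁻¹) := Matrix.inv_eq_right_inv hSM
  -- trace identity
  set T := star x ⬝ᵥ (M *ᵥ q) with hTdef
  have hT : Matrix.trace (A⁻¹ * R * A⁻¹ * M) = T := by
    have h1 : A⁻¹ * R * A⁻¹ * M = vecMulVec q (star x ᵥ* M) := by
      rw [hRdef, aux_mul_vecMulVec, ← hqdef, aux_vecMulVec_mul, aux_vecMulVec_mul,
        ← hstarx]
    rw [h1, aux_trace_vecMulVec, dotProduct_comm, hTdef]
    exact (dotProduct_mulVec _ _ _).symm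
  have hdiff : Matrix.trace (A⁻¹ * M)
      - Matrix.trace ((B + R - z • (1 : Matrix (Fin p) (Fin p) ℂ))⁻¹ * M) = d⁻¹ * T := by
    rw [hA1eq, hinv, Matrix.sub_mul, Matrix.smul_mul, Matrix.trace_sub, Matrix.trace_smul,
      smul_eq_mul, hT]
    ring
  -- norm of x equals norm of q
  have hcomm : A * Aᴴ = Aᴴ * A := by
    rw [hA, hAH]
    simp only [Matrix.sub_mul, Matrix.mul_sub, Matrix.smul_mul, Matrix.mul_smul,
      Matrix.one_mul, Matrix.mul_one, smul_sub, smul_smul]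
    rw [mul_comm ((starRingEnd ℂ) z) z]
    abel
  have hstarq : star q = star r ᵥ* (Aᴴ)⁻¹ := by
    rw [hqdef, star_mulVec, Matrix.conjTranspose_nonsing_inv]
  have hxq : star x ⬝ᵥ x = star q ⬝ᵥ q := by
    have h1 : star q ⬝ᵥ q = star r ᵥ* (A * Aᴴ)⁻¹ ⬝ᵥ r := by
      rw [hqdef, dotProduct_mulVec, hstarq, vecMul_vecMul, ← Matrix.mul_inv_rev]
    have h2 : star x ⬝ᵥ x = star r ᵥ* (Aᴴ * A)⁻¹ ⬝ᵥ r := by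
      rw [hxdef, dotProduct_mulVec, hstarx, vecMul_vecMul, ← Matrix.mul_inv_rev]
    rw [h1, h2, hcomm]
  have hnx : ‖Ee x‖ = nq := by
    have h := hxq
    rw [hnormsq x, hnormsq q] at h
    have h' : ‖Ee x‖ ^ 2 = ‖Ee q‖ ^ 2 := by exact_mod_cast h
    exact (sq_eq_sq₀ (norm_nonneg _) (norm_nonneg _)).mp h'
  -- bound on T
  have hMq : ‖Ee (M *ᵥ q)‖ ≤ K * nq := by
    have h1 : Ee (M *ᵥ q) = Matrix.toEuclideanCLM (𝕜 := ℂ) M (Ee q) := by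
      rw [hEe]
      exact (Matrix.toEuclideanCLM_toLp M q).symm
    rw [h1, hK, hnq]
    exact (Matrix.toEuclideanCLM (𝕜 := ℂ) M).le_opNorm (Ee q)
  have hTle : ‖T‖ ≤ K * nq ^ 2 := by
    have h1 : ‖T‖ = ‖(inner ℂ (Ee x) (Ee (M *ᵥ q)) : ℂ)‖ := by
      rw [hinner, hTdef]
    calc ‖T‖ ≤ ‖Ee x‖ * ‖Ee (M *ᵥ q)‖ := by rw [h1]; exact norm_inner_le_norm _ _
      _ ≤ nq * (K * nq) := by
          apply mul_le_mul (le_of_eq hnx) hMq (norm_nonneg _)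
          exact hnqpos.le
      _ = K * nq ^ 2 := by ring
  -- lower bound on |d|
  have hdabs : z.im * nq ^ 2 ≤ ‖d‖ := by
    calc z.im * nq ^ 2 = d.im := hdim.symm
      _ ≤ |d.im| := le_abs_self _
      _ ≤ ‖d‖ := Complex.abs_im_le_norm d
  -- finish
  rw [hdiff, norm_mul, norm_inv]
  have hpos : 0 < z.im * nq ^ 2 := by positivity
  calc ‖d‖⁻¹ * ‖T‖
      ≤ (z.im * nq ^ 2)⁻¹ * (K * nq ^ 2) := by
        apply mul_le_mul _ hTle (norm_nonneg _) (by positivity)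
        exact inv_anti₀ hpos hdabs
    _ = K / z.im := by
        field_simp
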